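/- Let H be a symmetric positive definite m × m real matrix with all eigenvalues in (0, 1), let T : ℝ^m → ℝ^m be a continuous nonexpansive map with at least one fixed point, and define v^{k+1} = (I − H) v^k + H T(v^k) starting from any v^0. Then ‖v^k − T(v^k)‖ → 0 as k → ∞. -/

import Mathlib

open Matrix Filter

/-- `(1-c)•I - H` is PSD when all eigenvalues of `H` are at most `1-c`. -/
lemma aux_shift_posSemidef {m : ℕ} (H : Matrix (Fin m) (Fin m) ℝ) (hH : H.PosDef)
    (c : ℝ) (hc : ∀ i, hH.1.eigenvalues i ≤ 1 - c) :
    ((1 - c) • (1 : Matrix (Fin m) (Fin m) ℝ) - H).PosSemidef := by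
  set U := (hH.1.eigenvectorUnitary : Matrix (Fin m) (Fin m) ℝ) with hUdef
  have hU : U * star U = 1 := (Matrix.mem_unitaryGroup_iff).mp (hH.1.eigenvectorUnitary).2
  have key : (1 - c) • (1 : Matrix (Fin m) (Fin m) ℝ) - H =
      U * diagonal (fun i => (1 - c) - hH.1.eigenvalues i) * star U := by
    conv_lhs => rw [hH.1.spectral_theorem, Unitary.conjStarAlgAut_apply]
    have h1 : (1 - c) • (1 : Matrix (Fin m) (Fin m) ℝ) =
        U * ((1 - c) • (1 : Matrix (Fin m) (Fin m) ℝ)) * star U := by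
      rw [Matrix.mul_smul, Matrix.mul_one, Matrix.smul_mul, hU]
    rw [h1, ← Matrix.sub_mul, ← Matrix.mul_sub]
    congr 1
    congr 1
    ext i j
    rcases eq_or_ne i j with h | h <;>
      simp [diagonal, h, Matrix.one_apply, Function.comp]
  rw [key]
  have : (diagonal (fun i => (1 - c) - hH.1.eigenvalues i)).PosSemidef :=
    posSemidef_diagonal_iff.mpr fun i => by linarith [hc i]
  simpa [star_eq_conjTranspose] using this.mul_mul_conjTranspose_same U

lemma aux_inner_nonneg {m : ℕ} {A : Matrix (Fin m) (Fin m) ℝ} (hA : A.PosSemidef)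
    (x : EuclideanSpace ℝ (Fin m)) :
    0 ≤ (inner ℝ (Matrix.toEuclideanLin A x) x : ℝ) := by
  have := hA.dotProduct_mulVec_nonneg ((WithLp.equiv 2 _) x)
  simp [Matrix.toEuclideanLin_apply, PiLp.inner_apply, dotProduct, mul_comm] at this ⊢
  exact this

theorem preconditioned_mann_residual_tendsto_zero {m : ℕ}
    (H : Matrix (Fin m) (Fin m) ℝ) (hH : H.PosDef)
    (heig : ∀ i, hH.1.eigenvalues i ∈ Set.Ioo (0:ℝ) 1)
    (T : EuclideanSpace ℝ (Fin m) → EuclideanSpace ℝ (Fin m))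
    (hTcont : Continuous T)
    (hT : ∀ x y, ‖T x - T y‖ ≤ ‖x - y‖)
    (hfix : ∃ w, T w = w)
    (v : ℕ → EuclideanSpace ℝ (Fin m))
    (hrec : ∀ k, v (k + 1) =
      (v k - Matrix.toEuclideanLin H (v k)) + Matrix.toEuclideanLin H (T (v k))) :
    Filter.Tendsto (fun k => ‖v k - T (v k)‖) Filter.atTop (nhds 0) := by
  rcases Nat.eq_zero_or_pos m with hm | hm
  · subst hm
    have : ∀ k, v k - T (v k) = 0 := fun k => Subsingleton.elim _ _
    simpa [this] using tendsto_const_nhds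
  haveI : Nonempty (Fin m) := ⟨⟨0, hm⟩⟩
  obtain ⟨w, hw⟩ := hfix
  set L := Matrix.toEuclideanLin H with hL
  set Li := Matrix.toEuclideanLin H⁻¹ with hLi
  have hdet : IsUnit H.det := isUnit_iff_ne_zero.mpr hH.det_pos.ne'
  -- composition facts
  have hcomp : ∀ (A B : Matrix (Fin m) (Fin m) ℝ) (x : EuclideanSpace ℝ (Fin m)),
      Matrix.toEuclideanLin (A*B) x = Matrix.toEuclideanLin A (Matrix.toEuclideanLin B x) := by
    intro A B x
    simp [Matrix.toEuclideanLin_apply, Matrix.mulVec_mulVec]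
  have hLiL : ∀ x, Li (L x) = x := by
    intro x
    rw [hLi, hL, ← hcomp, Matrix.nonsing_inv_mul H hdet]
    simp [Matrix.toEuclideanLin_apply]
  have hLLi : ∀ x, L (Li x) = x := by
    intro x
    rw [hLi, hL, ← hcomp, Matrix.mul_nonsing_inv H hdet]
    simp [Matrix.toEuclideanLin_apply]
  have hLsym : ∀ x y, (inner ℝ (L x) y : ℝ) = inner ℝ x (L y) :=
    (Matrix.isHermitian_iff_isSymmetric.mp hH.1)
  -- the Lyapunov function
  set Q : EuclideanSpace ℝ (Fin m) → ℝ := fun x => inner ℝ (Li x) x with hQ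
  have hQnonneg : ∀ x, 0 ≤ Q x := fun x => aux_inner_nonneg hH.inv.posSemidef x
  have hQexp : ∀ u r : EuclideanSpace ℝ (Fin m),
      Q (u + L r) = Q u + 2 * inner ℝ u r + (inner ℝ (L r) r : ℝ) := by
    intro u r
    have h1 : Li (u + L r) = Li u + r := by rw [map_add, hLiL]
    have h2 : (inner ℝ (Li u) (L r) : ℝ) = inner ℝ u r := by
      rw [real_inner_comm, hLsym, hLLi, real_inner_comm]
    simp only [hQ, h1, inner_add_left, inner_add_right, h2]
    rw [real_inner_comm r (L r), real_inner_comm r u]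
    ring
  -- the constant c
  set lam := hH.1.eigenvalues with hlam
  set c : ℝ := 1 - Finset.univ.sup' Finset.univ_nonempty lam with hc
  have hcpos : 0 < c := by
    have : Finset.univ.sup' Finset.univ_nonempty lam < 1 :=
      (Finset.sup'_lt_iff _).mpr fun i _ => (heig i).2
    simpa [hc] using sub_pos.mpr this
  have hcle : ∀ i, lam i ≤ 1 - c := fun i => by
    have := Finset.le_sup' lam (Finset.mem_univ i); rw [hc]; linarith
  -- eigenvalue bound: ⟪L r, r⟫ ≤ (1-c)‖r‖²
  have hLbound : ∀ r : EuclideanSpace ℝ (Fin m),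
      (inner ℝ (L r) r : ℝ) ≤ (1 - c) * ‖r‖ ^ 2 := by
    intro r
    have hps := aux_shift_posSemidef H hH c hcle
    have h0 := aux_inner_nonneg hps r
    have hsplit : Matrix.toEuclideanLin ((1 - c) • (1 : Matrix (Fin m) (Fin m) ℝ) - H) r
        = (1 - c) • r - L r := by
      simp [Matrix.toEuclideanLin_apply, Matrix.sub_mulVec, Matrix.smul_mulVec]
      rfl
    rw [hsplit, inner_sub_left, inner_smul_left] at h0
    have : (inner ℝ r r : ℝ) = ‖r‖ ^ 2 := real_inner_self_eq_norm_sq r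
    simp only [RCLike.star_def, starRingEnd_apply, star_trivial] at h0
    nlinarith [h0]
  -- the one-step inequality
  set r : ℕ → EuclideanSpace ℝ (Fin m) := fun k => T (v k) - v k with hr
  have hstep : ∀ k, v (k + 1) = v k + L (r k) := by
    intro k
    rw [hrec k, hr]
    simp only [map_sub]
    abel
  have hkey : ∀ k, Q (v (k+1) - w) + c * ‖r k‖ ^ 2 ≤ Q (v k - w) := by
    intro k
    have hv : v (k+1) - w = (v k - w) + L (r k) := by rw [hstep k]; abel
    rw [hv, hQexp]
    have hne : ‖(v k - w) + r k‖ ≤ ‖v k - w‖ := by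
      have := hT (v k) w
      rw [hw] at this
      have heq : T (v k) - w = (v k - w) + r k := by rw [hr]; beta_reduce; abel
      rw [heq] at this
      exact this
    have hsq : ‖(v k - w) + r k‖ ^ 2 ≤ ‖v k - w‖ ^ 2 :=
      pow_le_pow_left₀ (norm_nonneg _) hne 2
    have hexp : ‖(v k - w) + r k‖ ^ 2
        = ‖v k - w‖ ^ 2 + 2 * inner ℝ (v k - w) (r k) + ‖r k‖ ^ 2 := norm_add_sq_real _ _
    have h2 : 2 * (inner ℝ (v k - w) (r k) : ℝ) ≤ -‖r k‖ ^ 2 := by nlinarith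
    have h3 := hLbound (r k)
    nlinarith
  -- partial sums bounded
  have hsum : ∀ n, ∑ k ∈ Finset.range n, ‖r k‖ ^ 2 ≤ Q (v 0 - w) / c := by
    intro n
    rw [le_div_iff₀ hcpos]
    have : Q (v n - w) + (∑ k ∈ Finset.range n, ‖r k‖ ^ 2) * c ≤ Q (v 0 - w) := by
      induction n with
      | zero => simp
      | succ n ih =>
        have := hkey n
        rw [Finset.sum_range_succ]
        nlinarith
    nlinarith [hQnonneg (v n - w)]
  have hsummable : Summable (fun k => ‖r k‖ ^ 2) :=
    summable_of_sum_range_le (fun k => sq_nonneg _) hsum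
  have htend : Tendsto (fun k => ‖r k‖ ^ 2) atTop (nhds 0) := hsummable.tendsto_atTop_zero
  have htend2 : Tendsto (fun k => ‖r k‖) atTop (nhds 0) := by
    have := (Real.continuous_sqrt.tendsto' 0 0 (by simp)).comp htend
    convert this using 2 with k
    · exact (Real.sqrt_sq (norm_nonneg _)).symm
  have : (fun k => ‖v k - T (v k)‖) = fun k => ‖r k‖ := by
    funext k; rw [hr]; exact (norm_sub_rev _ _)
  rw [this]
  exact htend2
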